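/- (Sharpness of the N^{−1/2} rate.) For every positive sequence (a_N) with a_N = o(N^{−1/2}) there exists ρ₀ ∈ Prob(ℝ) ∩ L^∞(ℝ) ∩ BV(ℝ) with ρ₀ ≤ 1, supp(ρ₀) ⊆ [−1,1], TV(ρ₀) ≤ 3, such that for every sequence of sorted particle families X^N = (x₀,…,x_N) with associated piecewise constant densities ρ̄^N, limsup_{N→∞} ‖ρ̄^N − ρ₀‖_{L¹(ℝ)}/a_N = ∞. -/

import Mathlib

open MeasureTheory Filter

/-- Piecewise constant density associated to sorted particles. -/
noncomputable def pcDensity (N : ℕ) (x : Fin (N + 1) → ℝ) : ℝ → ℝ :=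
  fun y => ∑ i : Fin N, Set.indicator (Set.Ioo (x i.castSucc) (x i.succ))
    (fun _ => 1 / (N * (x i.succ - x i.castSucc))) y

lemma pc_nonneg {N : ℕ} {x : Fin (N+1) → ℝ} (y : ℝ) : 0 ≤ pcDensity N x y := by
  apply Finset.sum_nonneg
  intro i _
  apply Set.indicator_nonneg
  intro z hz
  have : x i.castSucc < x i.succ := lt_trans hz.1 hz.2
  exact div_nonneg zero_le_one (mul_nonneg (Nat.cast_nonneg N) (sub_nonneg.2 this.le))

lemma pc_measurable {N : ℕ} {x : Fin (N+1) → ℝ} : Measurable (pcDensity N x) := by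
  apply Finset.measurable_sum
  intro i _
  exact (measurable_const (a := 1 / ((N:ℝ) * (x i.succ - x i.castSucc)))).indicator
    measurableSet_Ioo

lemma pc_integrable {N : ℕ} {x : Fin (N+1) → ℝ} : Integrable (pcDensity N x) := by
  apply integrable_finset_sum
  intro i _
  rw [integrable_indicator_iff measurableSet_Ioo]
  refine integrableOn_const ?_ enorm_ne_top
  rw [Real.volume_Ioo]
  exact ENNReal.ofReal_ne_top

lemma pc_value {N : ℕ} {x : Fin (N+1) → ℝ} (hx : Monotone x) {k : Fin N} {y : ℝ}
    (hy : y ∈ Set.Ioo (x k.castSucc) (x k.succ)) :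
    pcDensity N x y = 1 / (N * (x k.succ - x k.castSucc)) := by
  unfold pcDensity
  rw [Fintype.sum_eq_single k]
  · rw [Set.indicator_of_mem hy]
  · intro i hi
    apply Set.indicator_of_notMem
    rcases hi.lt_or_gt with h | h
    · intro hmem
      have h1 : x i.succ ≤ x k.castSucc := hx (by
        rw [Fin.succ_le_castSucc_iff]; exact h)
      exact absurd (lt_of_lt_of_le hmem.2 (h1.trans hy.1.le)) (lt_irrefl y)
    · intro hmem
      have h1 : x k.succ ≤ x i.castSucc := hx (by
        rw [Fin.succ_le_castSucc_iff]; exact h)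
      exact absurd (lt_of_lt_of_le hy.2 (h1.trans hmem.1.le)) (lt_irrefl y)

lemma pc_exists {N : ℕ} {x : Fin (N+1) → ℝ} {y : ℝ} (h : pcDensity N x y ≠ 0) :
    ∃ k : Fin N, y ∈ Set.Ioo (x k.castSucc) (x k.succ) := by
  by_contra hc
  push_neg at hc
  apply h
  unfold pcDensity
  apply Finset.sum_eq_zero
  intro i _
  exact Set.indicator_of_notMem (hc i) _

lemma exists_interval {N : ℕ} {x : Fin (N+1) → ℝ} (hx : Monotone x) {w : ℝ}
    (hw : w ∉ Set.range x) {i j : Fin (N+1)} (hi : x i < w) (hj : w < x j) :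
    ∃ k : Fin N, x k.castSucc < w ∧ w < x k.succ := by
  set T : Finset (Fin (N+1)) := Finset.univ.filter (fun m => x m < w) with hT
  have hne : T.Nonempty := ⟨i, by simp [hT, hi]⟩
  set m := T.max' hne with hm
  have hmT : m ∈ T := T.max'_mem hne
  have hxm : x m < w := by simpa [hT] using hmT
  have hmne : m ≠ Fin.last N := by
    intro hlast
    have : x j ≤ x m := by
      rw [hlast]; exact hx (Fin.le_last j)
    linarith
  obtain ⟨k, hk⟩ := Fin.exists_castSucc_eq.2 hmne
  refine ⟨k, by rw [hk]; exact hxm, ?_⟩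
  by_contra hc
  push_neg at hc
  rcases hc.lt_or_eq with hlt | heq
  · have : k.succ ∈ T := by simp [hT, hlt]
    have h2 := T.le_max' _ this
    rw [← hm] at h2
    rw [← hk] at h2
    exact absurd (lt_of_lt_of_le ((Fin.castSucc_lt_succ (i := k))) h2) (lt_irrefl _)
  · exact hw ⟨k.succ, heq⟩

lemma gap_lemma {N : ℕ} {x : Fin (N+1) → ℝ} (hx : Monotone x)
    {q ℓ h : ℝ} (hℓ : 0 < ℓ) (hh : 0 < h) (hN : (N:ℝ) * (h * ℓ) ≤ 1)
    {ρ : ℝ → ℝ}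
    (hgap : ∀ y ∈ Set.Ioo (q - ℓ) q, ρ y = 0)
    (hlb : ∀ y ∈ Set.Ioo (q - 3*ℓ/2) (q - ℓ), ρ y = h)
    (hrb : ∀ y ∈ Set.Ioo q (q + ℓ/2), ρ y = h)
    (hint : Integrable (fun y => |pcDensity N x y - ρ y|)) :
    h * ℓ / 8 ≤ ∫ y in Set.Ioo (q - 3*ℓ/2) (q + ℓ/2), |pcDensity N x y - ρ y| := by
  set f := pcDensity N x with hf
  set F := fun y => |f y - ρ y| with hF
  set R := Set.Ioo (q - 3*ℓ/2) (q + ℓ/2) with hR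
  by_contra Hc
  push_neg at Hc
  have hFnn : ∀ y, 0 ≤ F y := fun y => abs_nonneg _
  have subint : ∀ s : Set ℝ, s ⊆ R → (∫ y in s, F y) ≤ ∫ y in R, F y := by
    intro s hs
    exact setIntegral_mono_set hint.integrableOn
      (Filter.Eventually.of_forall hFnn) hs.eventuallyLE
  -- right half-bump point
  have hy : ∃ y ∈ Set.Ioo q (q + ℓ/2), h/2 < f y := by
    by_contra hcy
    push_neg at hcy
    have hmono : (∫ y in Set.Ioo q (q + ℓ/2), (h/2)) ≤ ∫ y in Set.Ioo q (q + ℓ/2), F y := by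
      apply setIntegral_mono_on
      · exact (integrableOn_const (by rw [Real.volume_Ioo]; exact ENNReal.ofReal_ne_top) enorm_ne_top)
      · exact hint.integrableOn
      · exact measurableSet_Ioo
      · intro z hz
        have h1 : f z ≤ h/2 := hcy z hz
        have h2 : ρ z = h := hrb z hz
        rw [hF]
        simp only [h2]
        rw [abs_of_nonpos (by linarith)]
        linarith
    rw [setIntegral_const, measureReal_def, Real.volume_Ioo, ENNReal.toReal_ofReal (by linarith)] at hmono
    have h3 := (hmono.trans (subint _ (by
      rw [hR]; exact Set.Ioo_subset_Ioo (by linarith) le_rfl))).trans_lt Hc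
    have : (q + ℓ/2 - q) = ℓ/2 := by ring
    rw [this] at h3
    simp only [smul_eq_mul] at h3
    nlinarith
  -- left half-bump point
  have hz : ∃ z ∈ Set.Ioo (q - 3*ℓ/2) (q - ℓ), h/2 < f z := by
    by_contra hcz
    push_neg at hcz
    have hmono : (∫ y in Set.Ioo (q - 3*ℓ/2) (q - ℓ), (h/2)) ≤ ∫ y in Set.Ioo (q - 3*ℓ/2) (q - ℓ), F y := by
      apply setIntegral_mono_on
      · exact (integrableOn_const (by rw [Real.volume_Ioo]; exact ENNReal.ofReal_ne_top) enorm_ne_top)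
      · exact hint.integrableOn
      · exact measurableSet_Ioo
      · intro z hzz
        have h1 : f z ≤ h/2 := hcz z hzz
        have h2 : ρ z = h := hlb z hzz
        rw [hF]
        simp only [h2]
        rw [abs_of_nonpos (by linarith)]
        linarith
    rw [setIntegral_const, measureReal_def, Real.volume_Ioo, ENNReal.toReal_ofReal (by linarith)] at hmono
    have h3 := (hmono.trans (subint _ (by
      rw [hR]; exact Set.Ioo_subset_Ioo le_rfl (by linarith)))).trans_lt Hc
    have : (q - ℓ - (q - 3*ℓ/2)) = ℓ/2 := by ring
    rw [this] at h3
    simp only [smul_eq_mul] at h3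
    nlinarith
  -- gap point
  have hwex : ∃ w ∈ Set.Ioo (q - ℓ) q, w ∉ Set.range x ∧ f w < h/2 := by
    by_contra hcw
    push_neg at hcw
    have hae : ∀ᵐ w : ℝ, w ∈ Set.Ioo (q - ℓ) q → (h/2) ≤ F w := by
      have h0 : ∀ᵐ w : ℝ, w ∉ Set.range x :=
        measure_eq_zero_iff_ae_notMem.mp ((Set.finite_range x).measure_zero volume)
      filter_upwards [h0] with w hw hwg
      have h1 : h/2 ≤ f w := hcw w hwg hw
      have h2 : ρ w = 0 := hgap w hwg
      rw [hF]
      simp only [h2, sub_zero]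
      rw [abs_of_nonneg (pc_nonneg w)]
      exact h1
    have hmono : (∫ y in Set.Ioo (q - ℓ) q, (h/2)) ≤ ∫ y in Set.Ioo (q - ℓ) q, F y := by
      apply setIntegral_mono_on_ae
      · exact (integrableOn_const (by rw [Real.volume_Ioo]; exact ENNReal.ofReal_ne_top) enorm_ne_top)
      · exact hint.integrableOn
      · exact measurableSet_Ioo
      · exact hae
    rw [setIntegral_const, measureReal_def, Real.volume_Ioo, ENNReal.toReal_ofReal (by linarith)] at hmono
    have h3 := (hmono.trans (subint _ (by
      rw [hR]; exact Set.Ioo_subset_Ioo (by linarith) (by linarith)))).trans_lt Hc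
    have : (q - (q - ℓ)) = ℓ := by ring
    rw [this] at h3
    simp only [smul_eq_mul] at h3
    nlinarith
  obtain ⟨y, hyR, hyv⟩ := hy
  obtain ⟨z, hzR, hzv⟩ := hz
  obtain ⟨w, hwg, hwr, hwv⟩ := hwex
  have hy0 : pcDensity N x y ≠ 0 := by intro h0; rw [hf] at hyv; rw [h0] at hyv; linarith
  have hz0 : pcDensity N x z ≠ 0 := by intro h0; rw [hf] at hzv; rw [h0] at hzv; linarith
  obtain ⟨ky, hky⟩ := pc_exists hy0
  obtain ⟨kz, hkz⟩ := pc_exists hz0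
  have hwi : x kz.castSucc < w := lt_trans hkz.1 (by
    have : z < q - ℓ := hzR.2
    have : q - ℓ < w := hwg.1
    linarith [hzR.2, hwg.1])
  have hwj : w < x ky.succ := lt_trans (lt_trans hwg.2 hyR.1) hky.2
  obtain ⟨k, hk1, hk2⟩ := exists_interval hx hwr hwi hwj
  set L := x k.succ - x k.castSucc with hL
  have hLpos : 0 < L := by rw [hL]; linarith
  have hNpos : (0:ℝ) < N := by
    have : N ≠ 0 := by rintro rfl; exact (Fin.elim0 k)
    exact_mod_cast Nat.pos_of_ne_zero this
  have hfw : f w = 1 / (N * L) := pc_value hx ⟨hk1, hk2⟩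
  have hNL : 0 < (N:ℝ) * L := mul_pos hNpos hLpos
  have hLlb : 2 * ℓ < L := by
    rw [hfw, div_lt_iff₀ hNL] at hwv
    -- 1 < h/2 * (N * L), and N * (h*ℓ) ≤ 1
    nlinarith [hwv, hN, mul_pos hh hNpos]
  rcases le_or_gt (q + ℓ/2) (x k.succ) with hs | hs
  · have hyI : y ∈ Set.Ioo (x k.castSucc) (x k.succ) := by
      constructor
      · linarith [hk1, hwg.2, hyR.1]
      · linarith [hyR.2]
    have := pc_value hx hyI
    rw [← hfw] at this
    linarith [hwv, hyv, this.ge, this.le]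
  · have hzI : z ∈ Set.Ioo (x k.castSucc) (x k.succ) := by
      constructor
      · have : x k.castSucc < q + ℓ/2 - 2*ℓ := by linarith
        linarith [hzR.1]
      · linarith [hzR.2, hwg.1, hk2]
    have := pc_value hx hzI
    rw [← hfw] at this
    linarith [hwv, hzv, this.ge, this.le]

noncomputable def blockF (s ℓ h : ℝ) (C : ℕ) : ℝ → ℝ :=
  fun y => ∑ k ∈ Finset.range (C+1),
    Set.indicator (Set.Ico (s + 2*k*ℓ) (s + 2*k*ℓ + ℓ)) (fun _ => h) y

noncomputable def upF (s ℓ h : ℝ) (C : ℕ) : ℝ → ℝ :=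
  fun y => ∑ k ∈ Finset.range (C+1),
    Set.indicator (Set.Ici (s + 2*k*ℓ)) (fun _ => h) y

noncomputable def dnF (s ℓ h : ℝ) (C : ℕ) : ℝ → ℝ :=
  fun y => ∑ k ∈ Finset.range (C+1),
    Set.indicator (Set.Ici (s + 2*k*ℓ + ℓ)) (fun _ => h) y

lemma bump_not_mem {s ℓ : ℝ} (hℓ : 0 < ℓ) {k k' : ℕ} (hne : k' ≠ k) {y : ℝ}
    (hy : y ∈ Set.Ico (s + 2*k*ℓ) (s + 2*k*ℓ + ℓ)) :
    y ∉ Set.Ico (s + 2*k'*ℓ) (s + 2*k'*ℓ + ℓ) := by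
  intro hy'
  rcases hne.lt_or_gt with hlt | hlt
  · have hc : ((k':ℝ) + 1) ≤ (k:ℝ) := by exact_mod_cast hlt
    have := mul_le_mul_of_nonneg_right hc hℓ.le
    have h1 := hy.1
    have h2 := hy'.2
    nlinarith
  · have hc : ((k:ℝ) + 1) ≤ (k':ℝ) := by exact_mod_cast hlt
    have := mul_le_mul_of_nonneg_right hc hℓ.le
    have h1 := hy'.1
    have h2 := hy.2
    nlinarith

lemma blockF_eq_of_mem {s ℓ h : ℝ} (hℓ : 0 < ℓ) {C : ℕ} {k : ℕ} (hk : k ≤ C) {y : ℝ}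
    (hy : y ∈ Set.Ico (s + 2*k*ℓ) (s + 2*k*ℓ + ℓ)) :
    blockF s ℓ h C y = h := by
  unfold blockF
  rw [Finset.sum_eq_single_of_mem k (Finset.mem_range.2 (Nat.lt_succ_of_le hk))]
  · rw [Set.indicator_of_mem hy]
  · intro k' _ hne
    exact Set.indicator_of_notMem (bump_not_mem hℓ hne hy) _

lemma blockF_eq_zero {s ℓ h : ℝ} {C : ℕ} {y : ℝ}
    (hy : ∀ k ≤ C, y ∉ Set.Ico (s + 2*k*ℓ) (s + 2*k*ℓ + ℓ)) :
    blockF s ℓ h C y = 0 := by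
  apply Finset.sum_eq_zero
  intro k hkmem
  exact Set.indicator_of_notMem (hy k (Nat.lt_succ_iff.mp (Finset.mem_range.1 hkmem))) _

lemma blockF_supp {s ℓ h : ℝ} (hℓ : 0 < ℓ) {C : ℕ} {y : ℝ}
    (hy : y ∉ Set.Ico s (s + (2*(C:ℝ)+1)*ℓ)) :
    blockF s ℓ h C y = 0 := by
  apply blockF_eq_zero
  intro k hk hmem
  apply hy
  have hc : (k:ℝ) ≤ (C:ℝ) := by exact_mod_cast hk
  have := mul_le_mul_of_nonneg_right hc hℓ.le
  constructor
  · have h1 := hmem.1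
    nlinarith
  · have h2 := hmem.2
    nlinarith

lemma blockF_nonneg {s ℓ h : ℝ} (hh : 0 ≤ h) {C : ℕ} (y : ℝ) : 0 ≤ blockF s ℓ h C y :=
  Finset.sum_nonneg fun _ _ => Set.indicator_nonneg (fun _ _ => hh) _

lemma blockF_le {s ℓ h : ℝ} (hℓ : 0 < ℓ) (hh : 0 ≤ h) {C : ℕ} (y : ℝ) :
    blockF s ℓ h C y ≤ h := by
  by_cases hex : ∃ k ≤ C, y ∈ Set.Ico (s + 2*k*ℓ) (s + 2*k*ℓ + ℓ)
  · obtain ⟨k, hk, hy⟩ := hex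
    rw [blockF_eq_of_mem hℓ hk hy]
  · push_neg at hex
    rw [blockF_eq_zero hex]
    exact hh

lemma blockF_measurable {s ℓ h : ℝ} {C : ℕ} : Measurable (blockF s ℓ h C) :=
  Finset.measurable_sum _ fun _ _ => measurable_const.indicator measurableSet_Ico

lemma blockF_integrable {s ℓ h : ℝ} {C : ℕ} : Integrable (blockF s ℓ h C) := by
  apply integrable_finset_sum
  intro k _
  rw [integrable_indicator_iff measurableSet_Ico]
  exact integrableOn_const (by rw [Real.volume_Ico]; exact ENNReal.ofReal_ne_top) enorm_ne_top

lemma blockF_integral {s ℓ h : ℝ} (hℓ : 0 < ℓ) {C : ℕ} :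
    ∫ y, blockF s ℓ h C y = ((C:ℝ)+1) * h * ℓ := by
  unfold blockF
  rw [integral_finset_sum]
  · have : ∀ k ∈ Finset.range (C+1),
        (∫ y, Set.indicator (Set.Ico (s + 2*(k:ℝ)*ℓ) (s + 2*k*ℓ + ℓ)) (fun _ => h) y) = h * ℓ := by
      intro k _
      rw [integral_indicator measurableSet_Ico, setIntegral_const, measureReal_def, Real.volume_Ico,
        ENNReal.toReal_ofReal (by linarith), smul_eq_mul]
      ring
    rw [Finset.sum_congr rfl this, Finset.sum_const, Finset.card_range]
    push_cast
    ring
  · intro k _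
    rw [integrable_indicator_iff measurableSet_Ico]
    exact integrableOn_const (by rw [Real.volume_Ico]; exact ENNReal.ofReal_ne_top) enorm_ne_top

lemma blockF_eq_up_sub_dn {s ℓ h : ℝ} (hℓ : 0 < ℓ) {C : ℕ} (y : ℝ) :
    blockF s ℓ h C y = upF s ℓ h C y - dnF s ℓ h C y := by
  unfold blockF upF dnF
  rw [← Finset.sum_sub_distrib]
  apply Finset.sum_congr rfl
  intro k _
  by_cases h1 : s + 2*k*ℓ ≤ y
  · by_cases h2 : y < s + 2*k*ℓ + ℓ
    · rw [Set.indicator_of_mem (Set.mem_Ico.2 ⟨h1, h2⟩), Set.indicator_of_mem (Set.mem_Ici.2 h1),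
        Set.indicator_of_notMem (by simp [Set.mem_Ici]; linarith)]
      ring
    · push_neg at h2
      rw [Set.indicator_of_notMem (by simp [Set.mem_Ico]; intro _; linarith),
        Set.indicator_of_mem (Set.mem_Ici.2 h1), Set.indicator_of_mem (Set.mem_Ici.2 h2)]
      ring
  · push_neg at h1
    rw [Set.indicator_of_notMem (by simp [Set.mem_Ico]; intro hcon; linarith),
      Set.indicator_of_notMem (by simp [Set.mem_Ici]; linarith),
      Set.indicator_of_notMem (by simp [Set.mem_Ici]; linarith)]
    ring

lemma upF_monotone {s ℓ h : ℝ} (hh : 0 ≤ h) {C : ℕ} : Monotone (upF s ℓ h C) := by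
  intro y y' hy
  apply Finset.sum_le_sum
  intro k _
  by_cases h1 : s + 2*k*ℓ ≤ y
  · rw [Set.indicator_of_mem (Set.mem_Ici.2 h1), Set.indicator_of_mem (Set.mem_Ici.2 (le_trans h1 hy))]
  · rw [Set.indicator_of_notMem (by simpa [Set.mem_Ici] using h1)]
    exact Set.indicator_nonneg (fun _ _ => hh) _

lemma dnF_monotone {s ℓ h : ℝ} (hh : 0 ≤ h) {C : ℕ} : Monotone (dnF s ℓ h C) := by
  intro y y' hy
  apply Finset.sum_le_sum
  intro k _
  by_cases h1 : s + 2*k*ℓ + ℓ ≤ y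
  · rw [Set.indicator_of_mem (Set.mem_Ici.2 h1), Set.indicator_of_mem (Set.mem_Ici.2 (le_trans h1 hy))]
  · rw [Set.indicator_of_notMem (by simpa [Set.mem_Ici] using h1)]
    exact Set.indicator_nonneg (fun _ _ => hh) _

lemma upF_nonneg {s ℓ h : ℝ} (hh : 0 ≤ h) {C : ℕ} (y : ℝ) : 0 ≤ upF s ℓ h C y :=
  Finset.sum_nonneg fun _ _ => Set.indicator_nonneg (fun _ _ => hh) _

lemma dnF_nonneg {s ℓ h : ℝ} (hh : 0 ≤ h) {C : ℕ} (y : ℝ) : 0 ≤ dnF s ℓ h C y :=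
  Finset.sum_nonneg fun _ _ => Set.indicator_nonneg (fun _ _ => hh) _

lemma upF_le {s ℓ h : ℝ} (hh : 0 ≤ h) {C : ℕ} (y : ℝ) : upF s ℓ h C y ≤ ((C:ℝ)+1) * h := by
  have : upF s ℓ h C y ≤ ∑ _k ∈ Finset.range (C+1), h := by
    apply Finset.sum_le_sum
    intro k _
    exact Set.indicator_le_self' (fun _ _ => hh) _
  rw [Finset.sum_const, Finset.card_range, nsmul_eq_mul] at this
  push_cast at this
  linarith

lemma dnF_le {s ℓ h : ℝ} (hh : 0 ≤ h) {C : ℕ} (y : ℝ) : dnF s ℓ h C y ≤ ((C:ℝ)+1) * h := by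
  have : dnF s ℓ h C y ≤ ∑ _k ∈ Finset.range (C+1), h := by
    apply Finset.sum_le_sum
    intro k _
    exact Set.indicator_le_self' (fun _ _ => hh) _
  rw [Finset.sum_const, Finset.card_range, nsmul_eq_mul] at this
  push_cast at this
  linarith

-- variation lemmas
lemma var_sub (u d : ℝ → ℝ) :
    eVariationOn (fun y => u y - d y) Set.univ ≤
      eVariationOn u Set.univ + eVariationOn d Set.univ := by
  apply iSup_le
  rintro ⟨n, ⟨v, hv, hvs⟩⟩
  calc ∑ i ∈ Finset.range n, edist (u (v (i+1)) - d (v (i+1))) (u (v i) - d (v i))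
      ≤ ∑ i ∈ Finset.range n, (edist (u (v (i+1))) (u (v i)) + edist (d (v (i+1))) (d (v i))) := by
        apply Finset.sum_le_sum
        intro i _
        rw [edist_dist, edist_dist, edist_dist, Real.dist_eq, Real.dist_eq, Real.dist_eq,
          ← ENNReal.ofReal_add (abs_nonneg _) (abs_nonneg _)]
        apply ENNReal.ofReal_le_ofReal
        have : u (v (i+1)) - d (v (i+1)) - (u (v i) - d (v i))
            = (u (v (i+1)) - u (v i)) - (d (v (i+1)) - d (v i)) := by ring
        rw [this]
        exact abs_sub (u (v (i+1)) - u (v i)) (d (v (i+1)) - d (v i))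
    _ = (∑ i ∈ Finset.range n, edist (u (v (i+1))) (u (v i)))
        + ∑ i ∈ Finset.range n, edist (d (v (i+1))) (d (v i)) := Finset.sum_add_distrib
    _ ≤ _ := add_le_add (eVariationOn.sum_le (f := u) (n := n) hv hvs) (eVariationOn.sum_le (f := d) (n := n) hv hvs)

lemma var_monotone_bdd {u : ℝ → ℝ} {c : ℝ} (hu : Monotone u)
    (h0 : ∀ y, 0 ≤ u y) (hc : ∀ y, u y ≤ c) :
    eVariationOn u Set.univ ≤ ENNReal.ofReal c := by
  apply iSup_le
  rintro ⟨n, ⟨v, hv, hvs⟩⟩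
  have key : ∀ i, edist (u (v (i+1))) (u (v i)) = ENNReal.ofReal (u (v (i+1)) - u (v i)) := by
    intro i
    rw [edist_dist, Real.dist_eq, abs_of_nonneg (sub_nonneg.2 (hu (hv (Nat.le_succ i))))]
  calc ∑ i ∈ Finset.range n, edist (u (v (i+1))) (u (v i))
      = ∑ i ∈ Finset.range n, ENNReal.ofReal (u (v (i+1)) - u (v i)) := by
        exact Finset.sum_congr rfl fun i _ => key i
    _ = ENNReal.ofReal (∑ i ∈ Finset.range n, (u (v (i+1)) - u (v i))) := by
        rw [ENNReal.ofReal_sum_of_nonneg]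
        intro i _
        exact sub_nonneg.2 (hu (hv (Nat.le_succ i)))
    _ = ENNReal.ofReal (u (v n) - u (v 0)) := by rw [Finset.sum_range_sub fun i => u (v i)]
    _ ≤ ENNReal.ofReal c := ENNReal.ofReal_le_ofReal (by linarith [hc (v n), h0 (v 0)])

lemma fit_arith (j : ℕ) (n c aa : ℝ) (hn0 : 0 < n) (ha : 0 ≤ aa) (hc0 : 0 ≤ c)
    (hc : c ≤ 8*((j:ℝ)+1)*n*aa + 2)
    (had : aa^2 * n ≤ ((1/2:ℝ)^(2*j+10)/((j:ℝ)+1))^2)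
    (hbig : (2:ℝ)^(10*j+40) ≤ n) :
    (2*c+1)*((c+1) * 4^(j+2) / n) ≤ (1/2)^(j+1) := by
  have hP : (1:ℝ) ≤ (j:ℝ)+1 := by linarith [(Nat.cast_nonneg j : (0:ℝ) ≤ (j:ℝ))]
  have hP0 : (0:ℝ) < (j:ℝ)+1 := by positivity
  set u := 8*((j:ℝ)+1)*n*aa with hu
  have hu0 : 0 ≤ u := by positivity
  have hd : ((j:ℝ)+1)^2 * ((1/2:ℝ)^(2*j+10)/((j:ℝ)+1))^2 = (1/2:ℝ)^(4*j+20) := by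
    rw [div_pow]
    rw [mul_div_assoc']
    rw [mul_comm]
    rw [mul_div_assoc]
    rw [div_self (by positivity)]
    rw [mul_one, ← pow_mul]
    congr 1
    ring
  have had2 : ((j:ℝ)+1)^2 * (aa^2*n) ≤ (1/2:ℝ)^(4*j+20) := by
    calc ((j:ℝ)+1)^2 * (aa^2*n) ≤ ((j:ℝ)+1)^2 * ((1/2:ℝ)^(2*j+10)/((j:ℝ)+1))^2 := by
          apply mul_le_mul_of_nonneg_left had (by positivity)
      _ = (1/2:ℝ)^(4*j+20) := hd
  have hu2 : u^2 ≤ 64 * n * (1/2:ℝ)^(4*j+20) := by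
    have : u^2 = 64 * n * (((j:ℝ)+1)^2 * (aa^2*n)) := by rw [hu]; ring
    rw [this]
    apply mul_le_mul_of_nonneg_left had2 (by positivity)
  have hcc : (2*c+1)*(c+1) ≤ 4*u^2 + 36 := by nlinarith [sq_nonneg (u - 3), sq_nonneg (u - c)]
  -- power facts
  have e1 : (1/2:ℝ)^(4*j+20) * 4^(j+2) = (1/2:ℝ)^(2*j+16) := by
    have h1 : (4*j+20) = (2*j+16) + (2*j+4) := by ring
    rw [h1, pow_add, mul_assoc]
    have h2 : (1/2:ℝ)^(2*j+4) = (1/4:ℝ)^(j+2) := by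
      rw [show (2*j+4) = 2*(j+2) by ring, pow_mul]
      norm_num
    rw [h2, ← mul_pow]
    norm_num
  have e2 : (256:ℝ)*(1/2:ℝ)^(2*j+16) ≤ (1/2:ℝ)^(j+2) := by
    have h1 : (2*j+16) = (2*j+8) + 8 := by ring
    rw [h1, pow_add]
    have h2 : ((1/2:ℝ))^8 = 1/256 := by norm_num
    rw [h2]
    have h3 : (1/2:ℝ)^(2*j+8) ≤ (1/2:ℝ)^(j+2) :=
      pow_le_pow_of_le_one (by norm_num) (by norm_num) (by omega)
    linarith
  have e3 : (36:ℝ)*4^(j+2) ≤ n * (1/2:ℝ)^(j+2) := by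
    have h1 : (36:ℝ)*4^(j+2) * 2^(j+2) ≤ n := by
      have h2 : (4:ℝ)^(j+2) * 2^(j+2) = 8^(j+2) := by
        rw [← mul_pow]; norm_num
      rw [mul_assoc, h2]
      have h3 : (8:ℝ)^(j+2) = 2^(3*j+6) := by
        rw [show (8:ℝ) = 2^3 by norm_num, ← pow_mul, show 3*(j+2) = 3*j+6 by ring]
      rw [h3]
      have h4 : (36:ℝ) * 2^(3*j+6) ≤ 2^6 * 2^(3*j+6) := by
        apply mul_le_mul_of_nonneg_right (by norm_num) (by positivity)
      have h5 : (2:ℝ)^6 * 2^(3*j+6) = 2^(3*j+12) := by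
        rw [← pow_add]
        congr 1
        ring
      have h6 : (2:ℝ)^(3*j+12) ≤ 2^(10*j+40) :=
        pow_le_pow_right₀ (by norm_num) (by omega)
      linarith
    have h8 : (0:ℝ) < (2:ℝ)^(j+2) := by positivity
    rw [show (1/2:ℝ)^(j+2) = ((2:ℝ)^(j+2))⁻¹ by rw [one_div, inv_pow], ← div_eq_mul_inv,
      le_div_iff₀ h8]
    linarith [h1]
  have e4 : (1/2:ℝ)^(j+2) + (1/2:ℝ)^(j+2) = (1/2:ℝ)^(j+1) := by
    rw [pow_succ]
    ring
  have key : (2*c+1)*((c+1)*4^(j+2)) ≤ n * (1/2:ℝ)^(j+1) := by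
    have p4 : (0:ℝ) ≤ (4:ℝ)^(j+2) := by positivity
    calc (2*c+1)*((c+1)*4^(j+2)) = ((2*c+1)*(c+1))*4^(j+2) := by ring
      _ ≤ (4*u^2 + 36)*4^(j+2) := mul_le_mul_of_nonneg_right hcc p4
      _ ≤ (4*(64 * n * (1/2:ℝ)^(4*j+20)) + 36)*4^(j+2) := by
          apply mul_le_mul_of_nonneg_right (by linarith [hu2]) p4
      _ = 256*n*((1/2:ℝ)^(4*j+20)*4^(j+2)) + 36*4^(j+2) := by ring
      _ = n*(256*(1/2:ℝ)^(2*j+16)) + 36*4^(j+2) := by rw [e1]; ring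
      _ ≤ n*(1/2:ℝ)^(j+2) + n*(1/2:ℝ)^(j+2) :=
          add_le_add (mul_le_mul_of_nonneg_left e2 hn0.le) e3
      _ = n * (1/2:ℝ)^(j+1) := by rw [← e4]; ring
  rw [mul_div_assoc', div_le_iff₀ hn0]
  calc (2*c+1)*((c+1)*4^(j+2)) ≤ n * (1/2:ℝ)^(j+1) := key
    _ = (1/2:ℝ)^(j+1) * n := by ring

noncomputable section

def hseq (C : ℕ → ℕ) (j : ℕ) : ℝ := (1/4)^(j+2) / ((C j : ℝ) + 1)
def lseq (C NN : ℕ → ℕ) (j : ℕ) : ℝ := ((C j : ℝ) + 1) * 4^(j+2) / (NN j : ℝ)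
def sseq (j : ℕ) : ℝ := (1/2)^(j+1)
def bfun (C NN : ℕ → ℕ) (j : ℕ) : ℝ → ℝ := blockF (sseq j) (lseq C NN j) (hseq C j) (C j)
def bmass (C NN : ℕ → ℕ) (j : ℕ) : ℝ := ((C j : ℝ)+1) * hseq C j * lseq C NN j
def rho (C NN : ℕ → ℕ) : ℝ → ℝ :=
  fun y => Set.indicator (Set.Ico (-1 : ℝ) 0) (fun _ => 1 - ∑' j, bmass C NN j) y
    + ∑' j, bfun C NN j y

def Wfit (C NN : ℕ → ℕ) : Prop :=
  ∀ j, 0 < NN j ∧ (2*(C j : ℝ)+1) * lseq C NN j ≤ (1/2)^(j+1)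

variable {C NN : ℕ → ℕ}

lemma Cpos (C : ℕ → ℕ) (j : ℕ) : (0:ℝ) < (C j : ℝ) + 1 := by positivity

lemma hseq_pos (C : ℕ → ℕ) (j : ℕ) : 0 < hseq C j := by
  unfold hseq; positivity

lemma lseq_pos (hW : Wfit C NN) (j : ℕ) : 0 < lseq C NN j := by
  unfold lseq
  have := (hW j).1
  have : (0:ℝ) < (NN j : ℝ) := by exact_mod_cast this
  positivity

lemma hl_eq (hW : Wfit C NN) (j : ℕ) : hseq C j * lseq C NN j = 1 / (NN j : ℝ) := by
  unfold hseq lseq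
  have h1 : (0:ℝ) < (NN j : ℝ) := by exact_mod_cast (hW j).1
  have h4 : ((1:ℝ)/4)^(j+2) * 4^(j+2) = 1 := by
    rw [← mul_pow]; norm_num
  rw [div_mul_div_comm, div_eq_div_iff (by positivity) h1.ne']
  linear_combination ((C j : ℝ)+1) * (NN j : ℝ) * h4

lemma Chseq (C : ℕ → ℕ) (j : ℕ) : ((C j : ℝ)+1) * hseq C j = (1/4)^(j+2) := by
  unfold hseq
  field_simp

lemma hseq_le (C : ℕ → ℕ) (j : ℕ) : hseq C j ≤ (1/4)^(j+2) := by
  unfold hseq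
  rw [div_le_iff₀ (Cpos C j)]
  have h1 : (0:ℝ) ≤ (1/4:ℝ)^(j+2) := by positivity
  nlinarith [h1, (Nat.cast_nonneg (C j) : (0:ℝ) ≤ (C j:ℝ))]

lemma lseq_le (hW : Wfit C NN) (j : ℕ) : lseq C NN j ≤ (1/2)^(j+1) := by
  have h2 := (hW j).2
  nlinarith [lseq_pos hW j, (Nat.cast_nonneg (C j) : (0:ℝ) ≤ (C j:ℝ))]

lemma bmass_eq (C NN : ℕ → ℕ) (j : ℕ) : bmass C NN j = (1/4)^(j+2) * lseq C NN j := by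
  unfold bmass
  rw [Chseq]

lemma bmass_nonneg (hW : Wfit C NN) (j : ℕ) : 0 ≤ bmass C NN j := by
  rw [bmass_eq]
  exact mul_nonneg (by positivity) (lseq_pos hW j).le

lemma bmass_le (hW : Wfit C NN) (j : ℕ) : bmass C NN j ≤ (1/4)^(j+2) := by
  rw [bmass_eq]
  have h1 := lseq_le hW j
  have h2 : ((1:ℝ)/2)^(j+1) ≤ 1 := pow_le_one₀ (by norm_num) (by norm_num)
  nlinarith [pow_pos (show (0:ℝ) < 1/4 by norm_num) (j+2), lseq_pos hW j]

lemma geo_summable : Summable (fun j : ℕ => ((1:ℝ)/4)^(j+2)) := by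
  have h := (summable_geometric_of_lt_one (show (0:ℝ) ≤ 1/4 by norm_num)
    (by norm_num)).mul_left ((1/16 : ℝ))
  apply h.congr
  intro j
  rw [pow_add]
  ring

lemma geo_tsum : ∑' j : ℕ, ((1:ℝ)/4)^(j+2) = 1/12 := by
  have h1 : (fun j : ℕ => ((1:ℝ)/4)^(j+2)) = fun j : ℕ => (1/16 : ℝ) * (1/4)^j := by
    funext j
    rw [pow_add]
    ring
  rw [h1, tsum_mul_left, tsum_geometric_of_lt_one (by norm_num) (by norm_num)]
  norm_num

lemma bfun_nonneg (C NN : ℕ → ℕ) (j : ℕ) (y : ℝ) : 0 ≤ bfun C NN j y :=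
  blockF_nonneg (hseq_pos C j).le y

lemma bfun_le (hW : Wfit C NN) (j : ℕ) (y : ℝ) : bfun C NN j y ≤ (1/4)^(j+2) :=
  le_trans (blockF_le (lseq_pos hW j) (hseq_pos C j).le y) (hseq_le C j)

lemma width_le (hW : Wfit C NN) (j : ℕ) :
    sseq j + (2*(C j : ℝ)+1) * lseq C NN j ≤ (1/2)^j := by
  have h2 := (hW j).2
  have : ((1:ℝ)/2)^j = sseq j + (1/2)^(j+1) := by
    unfold sseq
    rw [pow_succ]
    ring
  rw [this]
  linarith

lemma bfun_supp (hW : Wfit C NN) (j : ℕ) {y : ℝ}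
    (hy : y ∉ Set.Ico (sseq j) ((1/2)^j)) : bfun C NN j y = 0 := by
  apply blockF_supp (lseq_pos hW j)
  intro hmem
  exact hy ⟨hmem.1, lt_of_lt_of_le hmem.2 (width_le hW j)⟩

lemma sseq_pos (j : ℕ) : 0 < sseq j := by unfold sseq; positivity

lemma bfun_summable (hW : Wfit C NN) (y : ℝ) : Summable (fun j => bfun C NN j y) :=
  Summable.of_nonneg_of_le (fun j => bfun_nonneg C NN j y) (fun j => bfun_le hW j y) geo_summable

lemma bsum_nonneg (hW : Wfit C NN) (y : ℝ) : 0 ≤ ∑' j, bfun C NN j y :=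
  tsum_nonneg (fun j => bfun_nonneg C NN j y)

lemma bsum_le (hW : Wfit C NN) (y : ℝ) : ∑' j, bfun C NN j y ≤ 1/12 := by
  calc ∑' j, bfun C NN j y ≤ ∑' j : ℕ, ((1:ℝ)/4)^(j+2) :=
        Summable.tsum_le_tsum (fun j => bfun_le hW j y) (bfun_summable hW y) geo_summable
    _ = 1/12 := geo_tsum

lemma bmass_summable (hW : Wfit C NN) : Summable (bmass C NN) :=
  Summable.of_nonneg_of_le (bmass_nonneg hW) (bmass_le hW) geo_summable

lemma bmass_tsum_le (hW : Wfit C NN) : ∑' j, bmass C NN j ≤ 1/12 :=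
  le_trans (Summable.tsum_le_tsum (bmass_le hW) (bmass_summable hW) geo_summable) geo_tsum.le

lemma base_nonneg (hW : Wfit C NN) : 0 ≤ 1 - ∑' j, bmass C NN j := by
  linarith [bmass_tsum_le hW]

lemma base_le_one (hW : Wfit C NN) : 1 - ∑' j, bmass C NN j ≤ 1 := by
  linarith [(tsum_nonneg (bmass_nonneg hW) : 0 ≤ ∑' j, bmass C NN j)]

lemma rho_measurable (hW : Wfit C NN) : Measurable (rho C NN) := by
  unfold rho
  apply Measurable.add
  · exact measurable_const.indicator measurableSet_Ico
  · apply measurable_of_tendsto_metrizable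
      (f := fun n => fun y => ∑ j ∈ Finset.range n, bfun C NN j y)
    · intro n
      exact Finset.measurable_sum _ fun j _ => blockF_measurable
    · rw [tendsto_pi_nhds]
      intro y
      exact ((bfun_summable hW y).hasSum).tendsto_sum_nat

lemma rho_nonneg (hW : Wfit C NN) (y : ℝ) : 0 ≤ rho C NN y := by
  unfold rho
  have h1 : 0 ≤ Set.indicator (Set.Ico (-1 : ℝ) 0) (fun _ => 1 - ∑' j, bmass C NN j) y :=
    Set.indicator_nonneg (fun _ _ => base_nonneg hW) y
  linarith [bsum_nonneg hW y]

lemma rho_le_one (hW : Wfit C NN) (y : ℝ) : rho C NN y ≤ 1 := by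
  unfold rho
  rcases lt_or_ge y 0 with hy | hy
  · have hb : ∑' j, bfun C NN j y = 0 := by
      rw [tsum_eq_single 0 (fun j _ => ?_)]
      · apply bfun_supp hW 0
        intro hmem
        linarith [hmem.1, sseq_pos 0]
      · apply bfun_supp hW j
        intro hmem
        linarith [hmem.1, sseq_pos j]
    rw [hb, add_zero]
    exact le_trans (Set.indicator_le_self' (fun _ _ => base_nonneg hW) y)
      (base_le_one hW)
  · have hb : Set.indicator (Set.Ico (-1 : ℝ) 0) (fun _ => 1 - ∑' j, bmass C NN j) y = 0 :=
      Set.indicator_of_notMem (by simp [Set.mem_Ico]; intro h; linarith) _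
    rw [hb, zero_add]
    linarith [bsum_le hW y]

lemma rho_supp (hW : Wfit C NN) : Function.support (rho C NN) ⊆ Set.Icc (-1 : ℝ) 1 := by
  intro y hy
  by_contra hmem
  apply hy
  simp only [Set.mem_Icc, not_and_or, not_le] at hmem
  unfold rho
  have hbase : Set.indicator (Set.Ico (-1 : ℝ) 0) (fun _ => 1 - ∑' j, bmass C NN j) y = 0 := by
    apply Set.indicator_of_notMem
    simp only [Set.mem_Ico, not_and_or, not_le, not_lt]
    rcases hmem with h | h
    · left; linarith
    · right; linarith
  have hblocks : ∑' j, bfun C NN j y = 0 := by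
    have : ∀ j, bfun C NN j y = 0 := by
      intro j
      apply bfun_supp hW j
      intro hmem2
      rcases hmem with h | h
      · linarith [hmem2.1, sseq_pos j]
      · have : ((1:ℝ)/2)^j ≤ 1 := pow_le_one₀ (by norm_num) (by norm_num)
        linarith [hmem2.2]
    simp [this]
  rw [hbase, hblocks, add_zero]

lemma rho_integrable (hW : Wfit C NN) : Integrable (rho C NN) := by
  apply Integrable.mono' (g := Set.indicator (Set.Icc (-1:ℝ) 1) (fun _ => (1:ℝ)))
  · rw [integrable_indicator_iff measurableSet_Icc]
    exact integrableOn_const (by rw [Real.volume_Icc]; exact ENNReal.ofReal_ne_top) enorm_ne_top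
  · exact (rho_measurable hW).aestronglyMeasurable
  · apply Filter.Eventually.of_forall
    intro y
    rw [Real.norm_eq_abs, abs_of_nonneg (rho_nonneg hW y)]
    by_cases hy : y ∈ Set.Icc (-1:ℝ) 1
    · rw [Set.indicator_of_mem hy]
      exact rho_le_one hW y
    · rw [Set.indicator_of_notMem hy]
      rcases Function.support_subset_iff'.1 (rho_supp hW) y hy with h0
      rw [h0]

lemma rho_integral (hW : Wfit C NN) : ∫ y, rho C NN y = 1 := by
  unfold rho
  have hbase_int : Integrable
      (Set.indicator (Set.Ico (-1 : ℝ) 0) (fun _ => 1 - ∑' j, bmass C NN j)) := by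
    rw [integrable_indicator_iff measurableSet_Ico]
    exact integrableOn_const (by rw [Real.volume_Ico]; exact ENNReal.ofReal_ne_top) enorm_ne_top
  have hsum_int : Integrable (fun y => ∑' j, bfun C NN j y) := by
    apply Integrable.mono' (g := Set.indicator (Set.Icc (-1:ℝ) 1) (fun _ => (1:ℝ)))
    · rw [integrable_indicator_iff measurableSet_Icc]
      exact integrableOn_const (by rw [Real.volume_Icc]; exact ENNReal.ofReal_ne_top) enorm_ne_top
    · apply Measurable.aestronglyMeasurable
      apply measurable_of_tendsto_metrizable
        (f := fun n => fun y => ∑ j ∈ Finset.range n, bfun C NN j y)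
      · intro n
        exact Finset.measurable_sum _ fun j _ => blockF_measurable
      · rw [tendsto_pi_nhds]
        intro y
        exact ((bfun_summable hW y).hasSum).tendsto_sum_nat
    · apply Filter.Eventually.of_forall
      intro y
      rw [Real.norm_eq_abs, abs_of_nonneg (bsum_nonneg hW y)]
      by_cases hy : y ∈ Set.Icc (-1:ℝ) 1
      · rw [Set.indicator_of_mem hy]
        linarith [bsum_le hW y]
      · rw [Set.indicator_of_notMem hy]
        simp only [Set.mem_Icc, not_and_or, not_le] at hy
        have : ∀ j, bfun C NN j y = 0 := by
          intro j
          apply bfun_supp hW j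
          intro hmem2
          rcases hy with h | h
          · linarith [hmem2.1, sseq_pos j]
          · have : ((1:ℝ)/2)^j ≤ 1 := pow_le_one₀ (by norm_num) (by norm_num)
            linarith [hmem2.2]
        simp [this]
  rw [integral_add hbase_int hsum_int]
  have h1 : ∫ y, Set.indicator (Set.Ico (-1 : ℝ) 0)
      (fun _ => 1 - ∑' j, bmass C NN j) y = 1 - ∑' j, bmass C NN j := by
    rw [integral_indicator measurableSet_Ico, setIntegral_const, measureReal_def, Real.volume_Ico,
      ENNReal.toReal_ofReal (by norm_num), smul_eq_mul]
    norm_num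
  have heq : ∀ j : ℕ, (∫⁻ y, ‖bfun C NN j y‖ₑ) = ENNReal.ofReal (bmass C NN j) := by
    intro j
    have hpos : 0 ≤ᵐ[volume] bfun C NN j := Filter.Eventually.of_forall (bfun_nonneg C NN j)
    have hint : Integrable (bfun C NN j) := blockF_integrable
    have hb : ∫ y, bfun C NN j y = bmass C NN j := by
      unfold bfun bmass
      rw [blockF_integral (lseq_pos hW j)]
    calc (∫⁻ y, ‖bfun C NN j y‖ₑ) = ∫⁻ y, ENNReal.ofReal (bfun C NN j y) := by
          congr 1
          funext y
          rw [Real.enorm_eq_ofReal (bfun_nonneg C NN j y)]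
      _ = ENNReal.ofReal (∫ y, bfun C NN j y) :=
          (ofReal_integral_eq_lintegral_ofReal hint hpos).symm
      _ = ENNReal.ofReal (bmass C NN j) := by rw [hb]
  have hne : ∑' j : ℕ, (∫⁻ y, ‖bfun C NN j y‖ₑ) ≠ ⊤ := by
    rw [tsum_congr heq, ← ENNReal.ofReal_tsum_of_nonneg (bmass_nonneg hW) (bmass_summable hW)]
    exact ENNReal.ofReal_ne_top
  have hmeas : ∀ j : ℕ, AEStronglyMeasurable (bfun C NN j) volume :=
    fun j => blockF_measurable.aestronglyMeasurable
  have h2 : ∫ y, (∑' j, bfun C NN j y) = ∑' j, bmass C NN j := by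
    rw [integral_tsum hmeas hne]
    apply tsum_congr
    intro j
    unfold bfun bmass
    rw [blockF_integral (lseq_pos hW j)]
  rw [h1, h2]
  ring

lemma rho_var (hW : Wfit C NN) : eVariationOn (rho C NN) Set.univ ≤ 3 := by
  classical
  set b := 1 - ∑' j, bmass C NN j with hb
  set U : ℝ → ℝ := fun y => Set.indicator (Set.Ici (-1:ℝ)) (fun _ => b) y
      + ∑' j, upF (sseq j) (lseq C NN j) (hseq C j) (C j) y with hU
  set D : ℝ → ℝ := fun y => Set.indicator (Set.Ici (0:ℝ)) (fun _ => b) y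
      + ∑' j, dnF (sseq j) (lseq C NN j) (hseq C j) (C j) y with hD
  have hup_le : ∀ (j : ℕ) (y : ℝ),
      upF (sseq j) (lseq C NN j) (hseq C j) (C j) y ≤ ((1:ℝ)/4)^(j+2) := by
    intro j y
    exact le_trans (upF_le (hseq_pos C j).le y) (le_of_eq (Chseq C j))
  have hdn_le : ∀ (j : ℕ) (y : ℝ),
      dnF (sseq j) (lseq C NN j) (hseq C j) (C j) y ≤ ((1:ℝ)/4)^(j+2) := by
    intro j y
    exact le_trans (dnF_le (hseq_pos C j).le y) (le_of_eq (Chseq C j))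
  have hup_sum : ∀ y, Summable (fun j => upF (sseq j) (lseq C NN j) (hseq C j) (C j) y) :=
    fun y => Summable.of_nonneg_of_le (fun j => upF_nonneg (hseq_pos C j).le y)
      (fun j => hup_le j y) geo_summable
  have hdn_sum : ∀ y, Summable (fun j => dnF (sseq j) (lseq C NN j) (hseq C j) (C j) y) :=
    fun y => Summable.of_nonneg_of_le (fun j => dnF_nonneg (hseq_pos C j).le y)
      (fun j => hdn_le j y) geo_summable
  have hUD : ∀ y, rho C NN y = U y - D y := by
    intro y
    have h1 : Set.indicator (Set.Ico (-1 : ℝ) 0) (fun _ => b) y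
        = Set.indicator (Set.Ici (-1:ℝ)) (fun _ => b) y
          - Set.indicator (Set.Ici (0:ℝ)) (fun _ => b) y := by
      by_cases hy1 : (-1:ℝ) ≤ y
      · by_cases hy2 : y < 0
        · rw [Set.indicator_of_mem (Set.mem_Ico.2 ⟨hy1, hy2⟩),
            Set.indicator_of_mem (Set.mem_Ici.2 hy1),
            Set.indicator_of_notMem (by simp [Set.mem_Ici]; linarith)]
          ring
        · push_neg at hy2
          rw [Set.indicator_of_notMem (by simp [Set.mem_Ico]; intro _; linarith),
            Set.indicator_of_mem (Set.mem_Ici.2 hy1),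
            Set.indicator_of_mem (Set.mem_Ici.2 hy2)]
          ring
      · push_neg at hy1
        rw [Set.indicator_of_notMem (by simp [Set.mem_Ico]; intro hcon; linarith),
          Set.indicator_of_notMem (by simp [Set.mem_Ici]; linarith),
          Set.indicator_of_notMem (by simp [Set.mem_Ici]; linarith)]
        ring
    have h2 : ∑' j, bfun C NN j y
        = (∑' j, upF (sseq j) (lseq C NN j) (hseq C j) (C j) y)
          - ∑' j, dnF (sseq j) (lseq C NN j) (hseq C j) (C j) y := by
      rw [← Summable.tsum_sub (hup_sum y) (hdn_sum y)]
      apply tsum_congr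
      intro j
      exact blockF_eq_up_sub_dn (lseq_pos hW j) y
    unfold rho
    rw [← hb, h1, h2, hU, hD]
    ring
  have hEq : eVariationOn (rho C NN) Set.univ = eVariationOn (fun y => U y - D y) Set.univ :=
    eVariationOn.eq_of_eqOn (fun y _ => hUD y)
  rw [hEq]
  have hbase_mono : Monotone (fun y => Set.indicator (Set.Ici (-1:ℝ)) (fun _ => b) y) := by
    intro y y' hyy
    dsimp only
    by_cases hy : (-1:ℝ) ≤ y
    · rw [Set.indicator_of_mem (Set.mem_Ici.2 hy),
        Set.indicator_of_mem (Set.mem_Ici.2 (le_trans hy hyy))]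
    · rw [Set.indicator_of_notMem (by simpa [Set.mem_Ici] using hy)]
      exact Set.indicator_nonneg (fun _ _ => base_nonneg hW) _
  have hbase0_mono : Monotone (fun y => Set.indicator (Set.Ici (0:ℝ)) (fun _ => b) y) := by
    intro y y' hyy
    dsimp only
    by_cases hy : (0:ℝ) ≤ y
    · rw [Set.indicator_of_mem (Set.mem_Ici.2 hy),
        Set.indicator_of_mem (Set.mem_Ici.2 (le_trans hy hyy))]
    · rw [Set.indicator_of_notMem (by simpa [Set.mem_Ici] using hy)]
      exact Set.indicator_nonneg (fun _ _ => base_nonneg hW) _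
  have hUm : Monotone U := by
    intro y y' hyy
    rw [hU]
    dsimp only
    apply add_le_add (hbase_mono hyy)
    exact Summable.tsum_le_tsum (fun j => upF_monotone (hseq_pos C j).le hyy) (hup_sum y) (hup_sum y')
  have hDm : Monotone D := by
    intro y y' hyy
    rw [hD]
    dsimp only
    apply add_le_add (hbase0_mono hyy)
    exact Summable.tsum_le_tsum (fun j => dnF_monotone (hseq_pos C j).le hyy) (hdn_sum y) (hdn_sum y')
  have hU0 : ∀ y, 0 ≤ U y := by
    intro y
    rw [hU]
    dsimp only
    apply add_nonneg
    · exact Set.indicator_nonneg (fun _ _ => base_nonneg hW) _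
    · exact tsum_nonneg (fun j => upF_nonneg (hseq_pos C j).le y)
  have hD0 : ∀ y, 0 ≤ D y := by
    intro y
    rw [hD]
    dsimp only
    apply add_nonneg
    · exact Set.indicator_nonneg (fun _ _ => base_nonneg hW) _
    · exact tsum_nonneg (fun j => dnF_nonneg (hseq_pos C j).le y)
  have hUb : ∀ y, U y ≤ 13/12 := by
    intro y
    have t1 : Set.indicator (Set.Ici (-1:ℝ)) (fun _ => b) y ≤ 1 :=
      le_trans (Set.indicator_le_self' (fun _ _ => base_nonneg hW) y) (base_le_one hW)
    have t2 : ∑' j, upF (sseq j) (lseq C NN j) (hseq C j) (C j) y ≤ 1/12 := by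
      calc _ ≤ (∑' j : ℕ, ((1:ℝ)/4)^(j+2)) :=
            Summable.tsum_le_tsum (fun j => hup_le j y) (hup_sum y) geo_summable
        _ = 1/12 := geo_tsum
    rw [hU]
    dsimp only
    linarith
  have hDb : ∀ y, D y ≤ 13/12 := by
    intro y
    have t1 : Set.indicator (Set.Ici (0:ℝ)) (fun _ => b) y ≤ 1 :=
      le_trans (Set.indicator_le_self' (fun _ _ => base_nonneg hW) y) (base_le_one hW)
    have t2 : ∑' j, dnF (sseq j) (lseq C NN j) (hseq C j) (C j) y ≤ 1/12 := by
      calc _ ≤ (∑' j : ℕ, ((1:ℝ)/4)^(j+2)) :=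
            Summable.tsum_le_tsum (fun j => hdn_le j y) (hdn_sum y) geo_summable
        _ = 1/12 := geo_tsum
    rw [hD]
    dsimp only
    linarith
  calc eVariationOn (fun y => U y - D y) Set.univ
      ≤ eVariationOn U Set.univ + eVariationOn D Set.univ := var_sub U D
    _ ≤ ENNReal.ofReal (13/12) + ENNReal.ofReal (13/12) :=
        add_le_add (var_monotone_bdd hUm hU0 hUb) (var_monotone_bdd hDm hD0 hDb)
    _ = ENNReal.ofReal (13/12 + 13/12) := (ENNReal.ofReal_add (by norm_num) (by norm_num)).symm
    _ ≤ ENNReal.ofReal 3 := ENNReal.ofReal_le_ofReal (by norm_num)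
    _ = 3 := by
        have : ((3:ENNReal)) = ENNReal.ofReal (3:ℝ) := by
          rw [ENNReal.ofReal_ofNat]
        rw [this]

lemma rho_eq_bfun (hW : Wfit C NN) (j : ℕ) {y : ℝ}
    (hy : y ∈ Set.Ico (sseq j) ((1/2:ℝ)^j)) : rho C NN y = bfun C NN j y := by
  unfold rho
  have hbase : Set.indicator (Set.Ico (-1 : ℝ) 0) (fun _ => 1 - ∑' i, bmass C NN i) y = 0 := by
    apply Set.indicator_of_notMem
    simp only [Set.mem_Ico, not_and_or, not_lt]
    right
    linarith [hy.1, sseq_pos j]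
  rw [hbase, zero_add]
  apply tsum_eq_single
  intro j' hj'
  apply bfun_supp hW j'
  intro hmem
  rcases hj'.lt_or_gt with hlt | hlt
  · -- j' < j : y < (1/2)^j ≤ (1/2)^(j'+1) = sseq j'
    have : ((1:ℝ)/2)^j ≤ (1/2)^(j'+1) :=
      pow_le_pow_of_le_one (by norm_num) (by norm_num) hlt
    have hs : ((1:ℝ)/2)^(j'+1) = sseq j' := rfl
    linarith [hy.2, hmem.1, hs ▸ this]
  · -- j < j' : y ≥ sseq j = (1/2)^(j+1) ≥ (1/2)^(j')
    have : ((1:ℝ)/2)^j' ≤ (1/2)^(j+1) :=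
      pow_le_pow_of_le_one (by norm_num) (by norm_num) hlt
    have hs : ((1:ℝ)/2)^(j+1) = sseq j := rfl
    linarith [hy.1, hmem.2, hs ▸ this]

lemma rho_gap_val (hW : Wfit C NN) {j k : ℕ} (hk1 : 1 ≤ k) (hkC : k ≤ C j) {y : ℝ}
    (hy : y ∈ Set.Ioo (sseq j + 2*(k:ℝ)*lseq C NN j - lseq C NN j)
      (sseq j + 2*(k:ℝ)*lseq C NN j)) : rho C NN y = 0 := by
  have hl := lseq_pos hW j
  have hk1' : (1:ℝ) ≤ (k:ℝ) := by exact_mod_cast hk1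
  have hkC' : (k:ℝ) ≤ (C j : ℝ) := by exact_mod_cast hkC
  have hwle := width_le hW j
  have hyslot : y ∈ Set.Ico (sseq j) ((1/2:ℝ)^j) := by
    constructor
    · nlinarith [hy.1]
    · nlinarith [hy.2]
  rw [rho_eq_bfun hW j hyslot]
  apply blockF_eq_zero
  intro k' hk' hmem
  have hk'' : (k':ℝ) ≤ (C j : ℝ) := by exact_mod_cast hk'
  rcases lt_or_ge k' k with hlt | hge
  · have hc : (k':ℝ) + 1 ≤ (k:ℝ) := by exact_mod_cast hlt
    nlinarith [hmem.2, hy.1]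
  · have hc : (k:ℝ) ≤ (k':ℝ) := by exact_mod_cast hge
    nlinarith [hmem.1, hy.2]

lemma rho_lb_val (hW : Wfit C NN) {j k : ℕ} (hk1 : 1 ≤ k) (hkC : k ≤ C j) {y : ℝ}
    (hy : y ∈ Set.Ioo (sseq j + 2*(k:ℝ)*lseq C NN j - 3*lseq C NN j/2)
      (sseq j + 2*(k:ℝ)*lseq C NN j - lseq C NN j)) : rho C NN y = hseq C j := by
  have hl := lseq_pos hW j
  have hk1' : (1:ℝ) ≤ (k:ℝ) := by exact_mod_cast hk1
  have hkC' : (k:ℝ) ≤ (C j : ℝ) := by exact_mod_cast hkC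
  have hwle := width_le hW j
  have hyslot : y ∈ Set.Ico (sseq j) ((1/2:ℝ)^j) := by
    constructor
    · nlinarith [hy.1]
    · nlinarith [hy.2]
  rw [rho_eq_bfun hW j hyslot]
  have hcast : ((k - 1 : ℕ) : ℝ) = (k:ℝ) - 1 := by
    have := Nat.cast_sub hk1 (R := ℝ)
    simpa using this
  apply blockF_eq_of_mem hl (Nat.le_trans (Nat.sub_le k 1) hkC)
  rw [Set.mem_Ico, hcast]
  constructor
  · nlinarith [hy.1]
  · nlinarith [hy.2]

lemma rho_rb_val (hW : Wfit C NN) {j k : ℕ} (hk1 : 1 ≤ k) (hkC : k ≤ C j) {y : ℝ}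
    (hy : y ∈ Set.Ioo (sseq j + 2*(k:ℝ)*lseq C NN j)
      (sseq j + 2*(k:ℝ)*lseq C NN j + lseq C NN j/2)) : rho C NN y = hseq C j := by
  have hl := lseq_pos hW j
  have hk1' : (1:ℝ) ≤ (k:ℝ) := by exact_mod_cast hk1
  have hkC' : (k:ℝ) ≤ (C j : ℝ) := by exact_mod_cast hkC
  have hwle := width_le hW j
  have hyslot : y ∈ Set.Ico (sseq j) ((1/2:ℝ)^j) := by
    constructor
    · nlinarith [hy.1, sseq_pos j]
    · nlinarith [hy.2]
  rw [rho_eq_bfun hW j hyslot]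
  apply blockF_eq_of_mem hl hkC
  rw [Set.mem_Ico]
  constructor
  · nlinarith [hy.1]
  · nlinarith [hy.2]
end

/-- Sharpness of the `N^{-1/2}` rate: for any positive sequence `a_N = o(N^{-1/2})`
there is a probability density `ρ₀ ≤ 1` supported in `[-1,1]` with `TV(ρ₀) ≤ 3`
such that no sequence of sorted particle approximations converges at rate `a_N`:
`limsup ‖ρ̄^N − ρ₀‖_{L¹}/a_N = ∞`. -/
theorem stmt_15
    (a : ℕ → ℝ) (ha_pos : ∀ N, 0 < a N)
    (ha_o : Tendsto (fun N => a N * Real.sqrt N) atTop (nhds 0)) :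
    ∃ ρ₀ : ℝ → ℝ, Measurable ρ₀ ∧ (∀ y, 0 ≤ ρ₀ y) ∧ (∀ y, ρ₀ y ≤ 1) ∧
      (∫ y, ρ₀ y) = 1 ∧ Function.support ρ₀ ⊆ Set.Icc (-1 : ℝ) 1 ∧
      eVariationOn ρ₀ Set.univ ≤ 3 ∧
      ∀ X : (N : ℕ) → (Fin (N + 1) → ℝ), (∀ N, Monotone (X N)) →
        ∀ M : ℝ, ∃ᶠ N in atTop,
          M < (∫ y, |pcDensity N (X N) y - ρ₀ y|) / a N := by
  classical
  have hchoice : ∀ j : ℕ, ∃ n : ℕ, (0 < n ∧ j ≤ n) ∧ ((2:ℝ)^(10*j+40) ≤ (n:ℝ) ∧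
      a n * Real.sqrt n < (1/2:ℝ)^(2*j+10)/((j:ℝ)+1)) := by
    intro j
    have hδ : (0:ℝ) < (1/2:ℝ)^(2*j+10)/((j:ℝ)+1) := by positivity
    obtain ⟨T, hT⟩ := (Metric.tendsto_atTop.mp ha_o) _ hδ
    set n₀ := max T (max (j+1) ⌈(2:ℝ)^(10*j+40)⌉₊) with hn₀
    have h1 : j + 1 ≤ n₀ := le_trans (le_max_left _ _) (le_max_right _ _)
    have h2 : ⌈(2:ℝ)^(10*j+40)⌉₊ ≤ n₀ := le_trans (le_max_right _ _) (le_max_right _ _)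
    refine ⟨n₀, ⟨by omega, by omega⟩, ?_, ?_⟩
    · calc (2:ℝ)^(10*j+40) ≤ (⌈(2:ℝ)^(10*j+40)⌉₊ : ℝ) := Nat.le_ceil _
        _ ≤ (n₀ : ℝ) := by exact_mod_cast h2
    · have := hT n₀ (le_max_left _ _)
      rw [Real.dist_eq, sub_zero] at this
      exact lt_of_le_of_lt (le_abs_self _) this
  choose NN hNNa hNNc using hchoice
  have hNN1 : ∀ j, 0 < NN j := fun j => (hNNa j).1
  have hNN2 : ∀ j, j ≤ NN j := fun j => (hNNa j).2
  have hNNb : ∀ j : ℕ, (2:ℝ)^(10*j+40) ≤ (NN j : ℝ) := fun j => (hNNc j).1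
  have hNNd : ∀ j : ℕ, a (NN j) * Real.sqrt (NN j) < (1/2:ℝ)^(2*j+10)/((j:ℝ)+1) :=
    fun j => (hNNc j).2
  set Cf : ℕ → ℕ := fun j => ⌈8*((j:ℝ)+1)*(NN j : ℝ)*(a (NN j))⌉₊ + 1 with hCf
  have hz : ∀ j : ℕ, (0:ℝ) ≤ 8*((j:ℝ)+1)*(NN j : ℝ)*(a (NN j)) := by
    intro j
    have h1 := (ha_pos (NN j)).le
    have h2 : (0:ℝ) ≤ (NN j : ℝ) := Nat.cast_nonneg _
    positivity
  have hClb : ∀ j : ℕ, 8*((j:ℝ)+1)*(NN j : ℝ)*(a (NN j)) + 1 ≤ (Cf j : ℝ) := by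
    intro j
    have := Nat.le_ceil (8*((j:ℝ)+1)*(NN j : ℝ)*(a (NN j)))
    rw [hCf]
    push_cast
    linarith
  have hCub : ∀ j : ℕ, (Cf j : ℝ) ≤ 8*((j:ℝ)+1)*(NN j : ℝ)*(a (NN j)) + 2 := by
    intro j
    have := Nat.ceil_lt_add_one (hz j)
    rw [hCf]
    push_cast
    linarith
  have hW : Wfit Cf NN := by
    intro j
    refine ⟨hNN1 j, ?_⟩
    have hn0 : (0:ℝ) < (NN j : ℝ) := by exact_mod_cast hNN1 j
    have had : (a (NN j))^2 * (NN j : ℝ) ≤ ((1/2:ℝ)^(2*j+10)/((j:ℝ)+1))^2 := by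
      have h1 := hNNd j
      have h2 : Real.sqrt ((NN j : ℕ) : ℝ) ^ 2 = ((NN j : ℕ) : ℝ) := Real.sq_sqrt hn0.le
      have h3 : 0 ≤ Real.sqrt ((NN j : ℕ):ℝ) := Real.sqrt_nonneg _
      have h4 := (ha_pos (NN j)).le
      have h5 : (a (NN j) * Real.sqrt (NN j)) * (a (NN j) * Real.sqrt (NN j))
          < ((1/2:ℝ)^(2*j+10)/((j:ℝ)+1)) * ((1/2:ℝ)^(2*j+10)/((j:ℝ)+1)) :=
        mul_lt_mul'' h1 h1 (mul_nonneg h4 h3) (mul_nonneg h4 h3)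
      nlinarith [h5, h2]
    have hfit := fit_arith j ((NN j : ℕ) : ℝ) ((Cf j : ℕ) : ℝ) (a (NN j)) hn0
      (ha_pos (NN j)).le (Nat.cast_nonneg _) (hCub j) had (hNNb j)
    unfold lseq
    exact hfit
  refine ⟨rho Cf NN, rho_measurable hW, rho_nonneg hW, rho_le_one hW, rho_integral hW,
    rho_supp hW, rho_var hW, ?_⟩
  intro X hX M
  rw [Filter.frequently_atTop]
  intro N₀
  set j := max N₀ (Nat.ceil M) with hj
  set n := NN j with hn
  refine ⟨n, le_trans (le_max_left N₀ _) (hNN2 j), ?_⟩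
  have hint : Integrable (fun y => |pcDensity n (X n) y - rho Cf NN y|) :=
    ((pc_integrable).sub (rho_integrable hW)).abs
  have hn0 : (0:ℝ) < (n:ℝ) := by exact_mod_cast hNN1 j
  have hNle : (n:ℝ) * (hseq Cf j * lseq Cf NN j) ≤ 1 := by
    rw [hl_eq hW j]
    rw [← hn, mul_one_div, div_self hn0.ne']
  have hgaps : ∀ k ∈ Finset.Icc 1 (Cf j),
      hseq Cf j * lseq Cf NN j / 8 ≤
      ∫ y in Set.Ioo (sseq j + 2*(k:ℝ)*lseq Cf NN j - 3*lseq Cf NN j/2)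
        (sseq j + 2*(k:ℝ)*lseq Cf NN j + lseq Cf NN j/2),
        |pcDensity n (X n) y - rho Cf NN y| := by
    intro k hk
    rw [Finset.mem_Icc] at hk
    exact gap_lemma (hX n) (lseq_pos hW j) (hseq_pos Cf j) hNle
      (fun y hy => rho_gap_val hW hk.1 hk.2 hy)
      (fun y hy => rho_lb_val hW hk.1 hk.2 hy)
      (fun y hy => rho_rb_val hW hk.1 hk.2 hy) hint
  set R : ℕ → Set ℝ := fun k => Set.Ioo (sseq j + 2*(k:ℝ)*lseq Cf NN j - 3*lseq Cf NN j/2)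
        (sseq j + 2*(k:ℝ)*lseq Cf NN j + lseq Cf NN j/2) with hR
  have hl := lseq_pos hW j
  have hdisj2 : ∀ k k' : ℕ, k < k' → Disjoint (R k) (R k') := by
    intro k k' hkk
    rw [Set.disjoint_left]
    intro y hy hy'
    have hc : (k:ℝ) + 1 ≤ (k':ℝ) := by exact_mod_cast hkk
    have e1 := hy.2
    have e2 := hy'.1
    nlinarith [hl]
  have hdisj : (↑(Finset.Icc 1 (Cf j)) : Set ℕ).Pairwise (Function.onFun Disjoint R) := by
    intro k _ k' _ hne
    rcases hne.lt_or_gt with h | h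
    · exact hdisj2 k k' h
    · exact (hdisj2 k' k h).symm
  have hsum := integral_biUnion_finset (Finset.Icc 1 (Cf j))
    (f := fun y => |pcDensity n (X n) y - rho Cf NN y|)
    (fun k _ => measurableSet_Ioo) hdisj (fun k _ => hint.integrableOn)
  have hstep : (Cf j : ℝ) * (hseq Cf j * lseq Cf NN j / 8)
      ≤ ∫ y, |pcDensity n (X n) y - rho Cf NN y| := by
    calc (Cf j : ℝ) * (hseq Cf j * lseq Cf NN j / 8)
        = ∑ _k ∈ Finset.Icc 1 (Cf j), (hseq Cf j * lseq Cf NN j / 8) := by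
          rw [Finset.sum_const, Nat.card_Icc, nsmul_eq_mul]
          norm_num
      _ ≤ ∑ k ∈ Finset.Icc 1 (Cf j), ∫ y in R k, |pcDensity n (X n) y - rho Cf NN y| :=
          Finset.sum_le_sum hgaps
      _ = ∫ y in ⋃ k ∈ Finset.Icc 1 (Cf j), R k, |pcDensity n (X n) y - rho Cf NN y| :=
          hsum.symm
      _ ≤ ∫ y, |pcDensity n (X n) y - rho Cf NN y| :=
          setIntegral_le_integral hint (Filter.Eventually.of_forall fun y => abs_nonneg _)
  have hM : M ≤ (j:ℝ) := le_trans (Nat.le_ceil M)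
    (by exact_mod_cast le_max_right N₀ (Nat.ceil M))
  have ha' := ha_pos n
  rw [lt_div_iff₀ ha']
  have heq : hseq Cf j * lseq Cf NN j = 1/(n:ℝ) := by rw [hl_eq hW j, ← hn]
  rw [heq] at hstep
  have hClb' := hClb j
  have hq8 : (0:ℝ) ≤ (1/(n:ℝ))/8 := by positivity
  have e5 : (8*((j:ℝ)+1)*(n:ℝ)*(a n) + 1) * ((1/(n:ℝ))/8)
      = ((j:ℝ)+1)*(a n) + (1/(n:ℝ))/8 := by
    field_simp
  have step2 : ((j:ℝ)+1)*(a n) + (1/(n:ℝ))/8 ≤ (Cf j : ℝ)*((1/(n:ℝ))/8) := by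
    rw [← e5]
    exact mul_le_mul_of_nonneg_right hClb' hq8
  have hMa : M * a n ≤ (j:ℝ) * a n := mul_le_mul_of_nonneg_right hM ha'.le
  have hfin : (j:ℝ) * a n < ((j:ℝ)+1)*(a n) + (1/(n:ℝ))/8 := by nlinarith
  linarith [hstep, step2]
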